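/- arXiv:2508.08673 — 7 statements merged into one kernel-verified Lean document; each statement's English description precedes it below -/
import Mathlib

section
/- For all real x > 0, the inequality x·log(x) ≤ 2(x - √x) + max(√x, 1)·(√x - 1)² holds. -/
lemma lemA {t : ℝ} (ht : 1 ≤ t) : 2 * t * Real.log t ≤ t ^ 2 - 1 := by
  have ht0 : 0 < t := lt_of_lt_of_le one_pos ht
  have hs : 0 ≤ Real.log t := Real.log_nonneg ht
  have h := Real.self_le_sinh_iff.mpr hs
  rw [Real.sinh_eq] at h
  have he : Real.exp (Real.log t) = t := Real.exp_log ht0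
  have he' : Real.exp (-Real.log t) = t⁻¹ := by rw [Real.exp_neg, he]
  rw [he, he'] at h
  have h2 : 2 * Real.log t ≤ t - t⁻¹ := by linarith
  have h3 := mul_le_mul_of_nonneg_left h2 ht0.le
  have h4 : t * t⁻¹ = 1 := mul_inv_cancel₀ ht0.ne'
  nlinarith [h4]

lemma hderivB {y : ℝ} (hy0 : 0 < y) :
    HasDerivAt (fun y => 3 * y ^ 2 - 4 * y + 1 - 2 * y ^ 2 * Real.log y)
      (6 * y - 4 - (4 * y * Real.log y + 2 * y)) y := by
  have h1 : HasDerivAt (fun x : ℝ => 3 * x ^ 2 - 4 * x + 1) (3 * (2 * y) - 4) y :=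
    (((hasDerivAt_pow 2 y).const_mul 3).sub ((hasDerivAt_id y).const_mul 4)).add_const 1
      |>.congr_deriv (by push_cast; ring)
  have h2 : HasDerivAt (fun x : ℝ => 2 * x ^ 2 * Real.log x)
      (2 * (↑2 * y ^ (2 - 1)) * Real.log y + 2 * y ^ 2 * y⁻¹) y :=
    ((hasDerivAt_pow 2 y).const_mul 2).mul (Real.hasDerivAt_log hy0.ne')
  have := h1.sub h2
  convert this using 1
  · rfl
  · rfl
  · rfl
  · have e : y ^ 2 * y⁻¹ = y := by field_simp
    have e2 : y ^ (2 - 1) = y := by norm_num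
    linear_combination (2:ℝ) * e - 4 * Real.log y * e2

lemma lemB {t : ℝ} (ht0 : 0 < t) (ht1 : t ≤ 1) :
    2 * t ^ 2 * Real.log t ≤ 3 * t ^ 2 - 4 * t + 1 := by
  set f : ℝ → ℝ := fun y => 3 * y ^ 2 - 4 * y + 1 - 2 * y ^ 2 * Real.log y with hf
  have key : AntitoneOn f (Set.Icc t 1) := by
    apply antitoneOn_of_deriv_nonpos (convex_Icc t 1)
    · apply ContinuousOn.sub
      · fun_prop
      · apply ContinuousOn.mul (by fun_prop)
        exact Real.continuousOn_log.mono (fun y hy => ne_of_gt (lt_of_lt_of_le ht0 hy.1))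
    · intro y hy
      rw [interior_Icc] at hy
      exact (hderivB (lt_trans ht0 hy.1)).differentiableAt.differentiableWithinAt
    · intro y hy
      rw [interior_Icc] at hy
      have hy0 : 0 < y := lt_trans ht0 hy.1
      rw [(hderivB hy0).deriv]
      have hlog : 1 - y⁻¹ ≤ Real.log y := by
        have := Real.log_le_sub_one_of_pos (inv_pos.mpr hy0)
        rw [Real.log_inv] at this
        linarith
      have hiy : y * y⁻¹ = 1 := mul_inv_cancel₀ hy0.ne'
      nlinarith [mul_le_mul_of_nonneg_left hlog (by positivity : (0:ℝ) ≤ 4 * y)]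
  have := key (Set.left_mem_Icc.mpr ht1) (Set.right_mem_Icc.mpr ht1) ht1
  simp only [hf, Real.log_one] at this
  linarith

theorem xlogx_ineq (x : ℝ) (hx : 0 < x) :
    x * Real.log x ≤
      2 * (x - Real.sqrt x) + max (Real.sqrt x) 1 * (Real.sqrt x - 1) ^ 2 := by
  set t := Real.sqrt x with hts
  have ht0 : 0 < t := Real.sqrt_pos.mpr hx
  have htx : t ^ 2 = x := Real.sq_sqrt hx.le
  have hlog : Real.log x = 2 * Real.log t := by
    rw [← htx, Real.log_pow]; push_cast; ring
  rcases le_total 1 t with h1 | h1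
  · rw [max_eq_left h1, hlog, ← htx]
    have := lemA h1
    nlinarith [mul_le_mul_of_nonneg_left this ht0.le]
  · rw [max_eq_right h1, hlog, ← htx]
    have := lemB ht0 h1
    nlinarith
end

section
/- Let Z be a random variable with values in a measurable space, and let p : Ω → [0,1] be measurable. Suppose there exist constants α ∈ [0,1) and C ≥ 1 such that P(p(Z) ≤ t) ≤ C·t^α for all t ∈ [0,1]. Then for any h ∈ (0,1], the integral of 1/p(z) over the set {p(z) ≥ h} with respect to the law of Z is at most C·h^{α-1}/(1-α). -/
open MeasureTheory

theorem small_value_bound_integral_lt_one {Ω : Type*} [MeasurableSpace Ω]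
    (μ : Measure Ω) [IsProbabilityMeasure μ]
    (p : Ω → ℝ) (hp : Measurable p) (hp01 : ∀ ω, p ω ∈ Set.Icc (0:ℝ) 1)
    (α C : ℝ) (hα0 : 0 ≤ α) (hα1 : α < 1) (hC : 1 ≤ C)
    (hsvb : ∀ t ∈ Set.Icc (0:ℝ) 1, μ {ω | p ω ≤ t} ≤ ENNReal.ofReal (C * t ^ α))
    (h : ℝ) (hh : h ∈ Set.Ioc (0:ℝ) 1) :
    ∫ ω in {ω | h ≤ p ω}, 1 / p ω ∂μ ≤ C * h ^ (α - 1) / (1 - α) := by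
  obtain ⟨hh0, hh1⟩ := hh
  have hC0 : (0:ℝ) < C := lt_of_lt_of_le one_pos hC
  have h1α : (0:ℝ) < 1 - α := by linarith
  have hinvh : (1:ℝ) ≤ 1 / h := one_le_one_div hh0 hh1
  set s : Set Ω := {ω | h ≤ p ω} with hs
  set ν : Measure Ω := μ.restrict s with hν
  have hsm : MeasurableSet s := measurableSet_le measurable_const hp
  have hf : Measurable (fun ω => 1 / p ω) := measurable_const.div hp
  have hnn : 0 ≤ᵐ[ν] fun ω => 1 / p ω :=
    Filter.Eventually.of_forall (fun ω => one_div_nonneg.mpr (hp01 ω).1)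
  -- key bound on exponent
  have hB0 : 0 ≤ C * h ^ (α - 1) / (1 - α) := by
    apply div_nonneg _ h1α.le
    exact mul_nonneg hC0.le (Real.rpow_nonneg hh0.le _)
  rw [integral_eq_lintegral_of_nonneg_ae hnn hf.aestronglyMeasurable]
  apply ENNReal.toReal_le_of_le_ofReal hB0
  rw [lintegral_eq_lintegral_meas_lt ν hnn hf.aemeasurable]
  -- split the domain
  have hsplit : Set.Ioi (0:ℝ) = Set.Ioc 0 1 ∪ Set.Ioi 1 := (Set.Ioc_union_Ioi_eq_Ioi zero_le_one).symm
  rw [hsplit, lintegral_union measurableSet_Ioi Set.Ioc_disjoint_Ioi_same]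
  have hpart1 : ∫⁻ t in Set.Ioc (0:ℝ) 1, ν {a | t < 1 / p a} ≤ 1 := by
    calc ∫⁻ t in Set.Ioc (0:ℝ) 1, ν {a | t < 1 / p a}
        ≤ ∫⁻ _ in Set.Ioc (0:ℝ) 1, 1 := by
          apply lintegral_mono (fun t => ?_)
          exact le_trans (Measure.restrict_apply_le _ _) prob_le_one
      _ = 1 := by simp
  have hpart2 : ∫⁻ t in Set.Ioi (1:ℝ), ν {a | t < 1 / p a}
      ≤ ∫⁻ t in Set.Ioc (1:ℝ) (1/h), ENNReal.ofReal (C * t ^ (-α)) := by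
    have hbound : ∀ t ∈ Set.Ioi (1:ℝ), ν {a | t < 1 / p a}
        ≤ (Set.Ioc (1:ℝ) (1/h)).indicator (fun t => ENNReal.ofReal (C * t ^ (-α))) t := by
      intro t ht
      simp only [Set.mem_Ioi] at ht
      by_cases hth : t ≤ 1 / h
      · rw [Set.indicator_of_mem (Set.mem_Ioc.mpr ⟨ht, hth⟩)]
        have hsub : {a | t < 1 / p a} ⊆ {a | p a ≤ 1 / t} := by
          intro a ha
          simp only [Set.mem_setOf_eq] at ha ⊢
          have hpa : 0 < p a := by
            by_contra hc
            push_neg at hc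
            have : p a = 0 := le_antisymm hc (hp01 a).1
            rw [this] at ha; simp at ha; linarith
          rw [lt_div_iff₀ hpa] at ha
          rw [le_div_iff₀ (by linarith : (0:ℝ) < t)]
          linarith [ha]
        calc ν {a | t < 1 / p a} ≤ μ {a | t < 1 / p a} := Measure.restrict_apply_le _ _
          _ ≤ μ {a | p a ≤ 1 / t} := measure_mono hsub
          _ ≤ ENNReal.ofReal (C * (1/t) ^ α) := by
              apply hsvb
              constructor
              · positivity
              · rw [div_le_one (by linarith : (0:ℝ) < t)]; linarith
          _ = ENNReal.ofReal (C * t ^ (-α)) := by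
              rw [one_div, Real.inv_rpow (by linarith : (0:ℝ) ≤ t), ← Real.rpow_neg (by linarith)]
      · rw [Set.indicator_of_notMem (fun hmem => hth hmem.2)]
        have hempty : ν {a | t < 1 / p a} = 0 := by
          rw [hν, Measure.restrict_apply (measurableSet_lt measurable_const hf)]
          have hset : {a | t < 1 / p a} ∩ s = ∅ := by
            ext a
            simp only [Set.mem_inter_iff, Set.mem_setOf_eq, Set.mem_empty_iff_false, iff_false,
            not_and, hs]
            intro ha hha
            have hpa : 0 < p a := lt_of_lt_of_le hh0 hha
            rw [lt_div_iff₀ hpa] at ha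
            push_neg at hth
            have h1 : (1/h) * h = 1 := by field_simp
            nlinarith [mul_lt_mul_of_pos_right hth hh0, mul_le_mul_of_nonneg_left hha
              (by linarith : (0:ℝ) ≤ t)]
          rw [hset, measure_empty]
        rw [hempty]
    calc ∫⁻ t in Set.Ioi (1:ℝ), ν {a | t < 1 / p a}
        ≤ ∫⁻ t in Set.Ioi (1:ℝ),
            (Set.Ioc (1:ℝ) (1/h)).indicator (fun t => ENNReal.ofReal (C * t ^ (-α))) t := by
          apply setLIntegral_mono' measurableSet_Ioi hbound
      _ = ∫⁻ t in Set.Ioc (1:ℝ) (1/h), ENNReal.ofReal (C * t ^ (-α)) := by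
          rw [lintegral_indicator measurableSet_Ioc, Measure.restrict_restrict measurableSet_Ioc,
            Set.inter_eq_left.mpr Set.Ioc_subset_Ioi_self]
  have hintegrable : IntegrableOn (fun t : ℝ => C * t ^ (-α)) (Set.Ioc 1 (1/h)) := by
    apply IntegrableOn.mono_set _ Set.Ioc_subset_Icc_self
    apply ContinuousOn.integrableOn_compact isCompact_Icc
    apply ContinuousOn.mul continuousOn_const
    intro x hx
    exact (Real.continuousAt_rpow_const x (-α) (Or.inl (by
      simp only [Set.mem_Icc] at hx; linarith))).continuousWithinAt
  have hcomp : ∫⁻ t in Set.Ioc (1:ℝ) (1/h), ENNReal.ofReal (C * t ^ (-α))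
      = ENNReal.ofReal (∫ t in Set.Ioc (1:ℝ) (1/h), C * t ^ (-α)) := by
    rw [← ofReal_integral_eq_lintegral_ofReal hintegrable]
    filter_upwards [ae_restrict_mem measurableSet_Ioc] with t ht
    exact mul_nonneg hC0.le (Real.rpow_nonneg (by linarith [ht.1] : (0:ℝ) ≤ t) _)
  have hval : ∫ t in Set.Ioc (1:ℝ) (1/h), C * t ^ (-α)
      = C * (h ^ (α - 1) - 1) / (1 - α) := by
    rw [← intervalIntegral.integral_of_le hinvh]
    rw [intervalIntegral.integral_const_mul]
    rw [integral_rpow (Or.inl (by linarith : (-1:ℝ) < -α))]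
    have : (1/h : ℝ) ^ (-α + 1) = h ^ (α - 1) := by
      rw [one_div, Real.inv_rpow hh0.le, ← Real.rpow_neg hh0.le]
      congr 1; ring
    rw [this, Real.one_rpow]
    ring
  have hh1' : (1:ℝ) ≤ h ^ (α - 1) := by
    have := Real.rpow_le_rpow_of_exponent_ge hh0 hh1 (show α - 1 ≤ (0:ℝ) by linarith)
    rwa [Real.rpow_zero] at this
  have hy0 : (0:ℝ) ≤ C * (h ^ (α - 1) - 1) / (1 - α) :=
    div_nonneg (mul_nonneg hC0.le (by linarith)) h1α.le
  have hfinal : (1:ℝ) + C * (h ^ (α - 1) - 1) / (1 - α) ≤ C * h ^ (α - 1) / (1 - α) := by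
    have e : C * h ^ (α - 1) / (1 - α) - C * (h ^ (α - 1) - 1) / (1 - α) = C / (1 - α) := by
      rw [div_sub_div_same]; congr 1; ring
    have e2 : (1:ℝ) ≤ C / (1 - α) := by rw [le_div_iff₀ h1α]; nlinarith
    linarith
  calc (∫⁻ t in Set.Ioc (0:ℝ) 1, ν {a | t < 1 / p a})
        + ∫⁻ t in Set.Ioi (1:ℝ), ν {a | t < 1 / p a}
      ≤ 1 + ENNReal.ofReal (C * (h ^ (α - 1) - 1) / (1 - α)) := by
        apply add_le_add hpart1
        rw [← hval, ← hcomp]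
        exact hpart2
    _ = ENNReal.ofReal (1 + C * (h ^ (α - 1) - 1) / (1 - α)) := by
        rw [← ENNReal.ofReal_one, ← ENNReal.ofReal_add zero_le_one hy0]
    _ ≤ ENNReal.ofReal (C * h ^ (α - 1) / (1 - α)) := ENNReal.ofReal_le_ofReal hfinal
end

section
/- Let Z be a random variable and p : Ω → [0,1] measurable. Suppose there exists a constant C ≥ 1 such that P(p(Z) ≤ t) ≤ C·t for all t ∈ [0,1]. Then for any h ∈ (0,1], the integral of 1/p(z) over the set {p(z) ≥ h} with respect to the law of Z is at most C·(1 - log h). -/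
open MeasureTheory intervalIntegral

theorem small_value_bound_integral_alpha_one {Ω : Type*} [MeasurableSpace Ω]
    (μ : Measure Ω) [IsProbabilityMeasure μ]
    (p : Ω → ℝ) (hp : Measurable p) (hp01 : ∀ ω, p ω ∈ Set.Icc (0:ℝ) 1)
    (C : ℝ) (hC : 1 ≤ C)
    (hsvb : ∀ t ∈ Set.Icc (0:ℝ) 1, μ {ω | p ω ≤ t} ≤ ENNReal.ofReal (C * t))
    (h : ℝ) (hh : h ∈ Set.Ioc (0:ℝ) 1) :
    ∫ ω in {ω | h ≤ p ω}, 1 / p ω ∂μ ≤ C * (1 - Real.log h) := by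
  obtain ⟨hh0, hh1⟩ := hh
  have hinvh1 : (1:ℝ) ≤ 1 / h := one_le_one_div hh0 hh1
  set s : Set Ω := {ω | h ≤ p ω} with hs_def
  have hs : MeasurableSet s := measurableSet_le measurable_const hp
  set ν : Measure Ω := μ.restrict s with hν_def
  have hfm : Measurable fun ω => 1 / p ω := measurable_const.div hp
  -- bound on s
  have hbound : ∀ᵐ ω ∂ν, ‖1 / p ω‖ ≤ 1 / h := by
    rw [hν_def, ae_restrict_iff' hs]
    refine Filter.Eventually.of_forall fun ω hω => ?_
    have hpω : h ≤ p ω := hω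
    have hpω0 : 0 < p ω := lt_of_lt_of_le hh0 hpω
    rw [Real.norm_eq_abs, abs_of_nonneg (by positivity)]
    exact one_div_le_one_div_of_le hh0 hpω
  have hint : Integrable (fun ω => 1 / p ω) ν :=
    Integrable.mono' (integrable_const (1 / h)) hfm.aestronglyMeasurable hbound
  have hnn : 0 ≤ᵐ[ν] fun ω => 1 / p ω :=
    Filter.Eventually.of_forall fun ω => by
      have := (hp01 ω).1; positivity
  have hbdd : (fun ω => 1 / p ω) ≤ᵐ[ν] fun _ => 1 / h := by
    filter_upwards [hbound] with ω hω
    exact le_trans (le_abs_self _) (by rwa [Real.norm_eq_abs] at hω)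
  rw [hint.integral_eq_integral_Ioc_meas_le hnn hbdd]
  set g : ℝ → ℝ := fun t => (ν {a | t ≤ 1 / p a}).toReal with hg_def
  change ∫ t in Set.Ioc 0 (1/h), g t ≤ _
  have g_anti : Antitone fun t => ν {a | t ≤ 1 / p a} :=
    fun _ _ hst => measure_mono fun a ha => hst.trans ha
  have g_meas : Measurable g := (Antitone.measurable g_anti).ennreal_toReal
  have g_nonneg : ∀ t, 0 ≤ g t := fun t => ENNReal.toReal_nonneg
  have g_le_one : ∀ t, g t ≤ 1 := by
    intro t
    refine ENNReal.toReal_le_of_le_ofReal zero_le_one ?_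
    rw [ENNReal.ofReal_one]
    calc ν {a | t ≤ 1 / p a} ≤ ν Set.univ := measure_mono (Set.subset_univ _)
      _ ≤ μ Set.univ := Measure.restrict_le_self _
      _ = 1 := measure_univ
  have g_intOn : ∀ a b : ℝ, IntegrableOn g (Set.Ioc a b) := by
    intro a b
    refine Measure.integrableOn_of_bounded (M := 1) measure_Ioc_lt_top.ne
      g_meas.aestronglyMeasurable ?_
    refine Filter.Eventually.of_forall fun t => ?_
    rw [Real.norm_eq_abs, abs_of_nonneg (g_nonneg t)]
    exact g_le_one t
  have hsplit : Set.Ioc (0:ℝ) (1/h) = Set.Ioc 0 1 ∪ Set.Ioc 1 (1/h) :=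
    (Set.Ioc_union_Ioc_eq_Ioc zero_le_one hinvh1).symm
  rw [hsplit, setIntegral_union (Set.Ioc_disjoint_Ioc_of_le le_rfl) measurableSet_Ioc
      (g_intOn 0 1) (g_intOn 1 (1/h))]
  -- first piece ≤ 1
  have h1 : ∫ t in Set.Ioc (0:ℝ) 1, g t ≤ 1 := by
    calc ∫ t in Set.Ioc (0:ℝ) 1, g t ≤ ∫ _ in Set.Ioc (0:ℝ) 1, (1:ℝ) :=
          setIntegral_mono_on (g_intOn 0 1) (integrableOn_const measure_Ioc_lt_top.ne)
            measurableSet_Ioc fun t _ => g_le_one t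
      _ = 1 := by simp
  -- second piece
  have hCt_int : IntegrableOn (fun t => C / t) (Set.Ioc (1:ℝ) (1/h)) := by
    rw [← intervalIntegrable_iff_integrableOn_Ioc_of_le hinvh1]
    have hne : ∀ x : ℝ, x ∈ Set.uIcc (1:ℝ) (1/h) → x ≠ 0 := by
      intro x hx
      rcases hx with ⟨hx1, _⟩
      have : (1:ℝ) ≤ x := by rwa [min_eq_left hinvh1] at hx1
      linarith
    have := (intervalIntegrable_one_div (μ := volume) (f := fun x => x)
      hne continuousOn_id).const_mul C
    simpa [mul_one_div, div_eq_mul_inv] using this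
  have h2 : ∫ t in Set.Ioc (1:ℝ) (1/h), g t ≤ ∫ t in Set.Ioc (1:ℝ) (1/h), C / t := by
    refine setIntegral_mono_on (g_intOn 1 (1/h)) hCt_int measurableSet_Ioc fun t ht => ?_
    obtain ⟨ht1, _⟩ := ht
    have ht0 : 0 < t := lt_trans zero_lt_one ht1
    have hmem : (1/t) ∈ Set.Icc (0:ℝ) 1 := by
      constructor
      · positivity
      · rw [div_le_one ht0]; linarith
    have hsubset : {a | t ≤ 1 / p a} ∩ s ⊆ {ω | p ω ≤ 1 / t} := by
      rintro a ⟨ha1, ha2⟩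
      have hpa : 0 < p a := lt_of_lt_of_le hh0 ha2
      have : t * p a ≤ 1 := by
        have := (le_div_iff₀ hpa).mp ha1
        linarith
      simp only [Set.mem_setOf_eq]
      rw [le_div_iff₀ ht0]
      linarith [mul_comm t (p a)]
    have hmeas : MeasurableSet {a | t ≤ 1 / p a} :=
      measurableSet_le measurable_const hfm
    have key : ν {a | t ≤ 1 / p a} ≤ ENNReal.ofReal (C * (1/t)) := by
      rw [hν_def, Measure.restrict_apply hmeas]
      exact le_trans (measure_mono hsubset) (hsvb (1/t) hmem)
    have := ENNReal.toReal_le_of_le_ofReal (by positivity) key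
    calc g t ≤ C * (1/t) := this
      _ = C / t := by ring
  have h3 : ∫ t in Set.Ioc (1:ℝ) (1/h), C / t = C * (-Real.log h) := by
    rw [← integral_of_le hinvh1]
    have hne : (0:ℝ) ∉ Set.uIcc (1:ℝ) (1/h) := by
      intro hx
      rcases hx with ⟨hx1, _⟩
      have : (1:ℝ) ≤ 0 := by rwa [min_eq_left hinvh1] at hx1
      linarith
    simp_rw [div_eq_mul_one_div C]
    rw [intervalIntegral.integral_const_mul, integral_one_div hne]
    rw [div_one, Real.log_div one_ne_zero (ne_of_gt hh0), Real.log_one]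
    ring
  have hlogh : Real.log h ≤ 0 := Real.log_nonpos (le_of_lt hh0) hh1
  have := add_le_add h1 (h2.trans_eq h3)
  nlinarith [this, mul_nonneg (by linarith : (0:ℝ) ≤ C - 1) (neg_nonneg.mpr hlogh)]
end

section
/- For probability measures P and Q on the same measurable space, the squared Hellinger distance is bounded by half the 2-truncated KL divergence: H²(P,Q) ≤ (1/2)·KL₂(P‖Q), where KL_B(P‖Q) = ∫ min(B, log(dP/dQ)) dP (with the convention that the log-ratio is +∞ on the part of P singular to Q). -/
open MeasureTheory

open scoped ENNReal NNReal

lemma klaux1 {t : ℝ} (ht : 0 ≤ t) :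
    t - Real.sqrt t ≤ (1/2) * (t * min 2 (Real.log t)) := by
  rcases le_total (Real.log t) 2 with h | h
  · rw [min_eq_right h]
    rcases eq_or_lt_of_le ht with h0 | h0
    · simp [← h0]
    · set s := Real.sqrt t with hs
      have hspos : 0 < s := Real.sqrt_pos.2 h0
      have hss : s * s = t := Real.mul_self_sqrt ht
      have hlog : Real.log t = 2 * Real.log s := by
        rw [hs, Real.log_sqrt ht]; ring
      have key : Real.log s⁻¹ ≤ s⁻¹ - 1 := Real.log_le_sub_one_of_pos (inv_pos.2 hspos)
      rw [Real.log_inv] at key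
      have hinv : s * s⁻¹ = 1 := mul_inv_cancel₀ hspos.ne'
      rw [hlog]
      nlinarith [mul_le_mul_of_nonneg_left key (mul_pos hspos hspos).le]
  · rw [min_eq_left h]
    have := Real.sqrt_nonneg t
    linarith

lemma klaux2 {t : ℝ} (ht : 0 ≤ t) :
    |t * min 2 (Real.log t)| ≤ 2 * t + 1 := by
  rw [abs_le]
  rcases le_total 1 t with h1 | h1
  · have hl : 0 ≤ Real.log t := Real.log_nonneg h1
    constructor
    · nlinarith [mul_nonneg ht (le_min (by norm_num : (0:ℝ) ≤ 2) hl)]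
    · nlinarith [mul_le_mul_of_nonneg_left (min_le_left 2 (Real.log t)) ht]
  · rcases eq_or_lt_of_le ht with h0 | h0
    · simp [← h0]
    · have hl : Real.log t ≤ 0 := Real.log_nonpos ht h1
      rw [min_eq_right (hl.trans (by norm_num))]
      have key : Real.log t⁻¹ ≤ t⁻¹ - 1 := Real.log_le_sub_one_of_pos (inv_pos.2 h0)
      rw [Real.log_inv] at key
      have hinv : t * t⁻¹ = 1 := mul_inv_cancel₀ h0.ne'
      constructor
      · nlinarith [mul_le_mul_of_nonneg_left key ht]
      · nlinarith [mul_nonpos_of_nonneg_of_nonpos ht hl]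

lemma klaux3 {t : ℝ} (ht : 0 ≤ t) : Real.sqrt t ≤ t + 1 := by
  nlinarith [Real.sq_sqrt ht, Real.sqrt_nonneg t]


/-- Squared Hellinger distance: `H²(P,Q) = 1 - ∫ √(dP dQ)`, computed with respect to
the dominating measure `P + Q`. -/
noncomputable def hellingerSq {Ω : Type*} [MeasurableSpace Ω] (P Q : Measure Ω) : ℝ :=
  1 - ∫ z, Real.sqrt ((P.rnDeriv (P + Q) z).toReal * (Q.rnDeriv (P + Q) z).toReal) ∂(P + Q)

/-- Truncated KL divergence `KL_B(P‖Q) = ∫ min(B, log(dP/dQ)) dP`, interpreted via the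
Lebesgue decomposition `P = Pᵃ + Pˢ` with `Pᵃ ≪ Q`: the log-ratio is `+∞` on the singular
part, so the integrand there equals `B`. -/
noncomputable def klTrunc {Ω : Type*} [MeasurableSpace Ω] (B : ℝ) (P Q : Measure Ω) : ℝ :=
  (∫ z, min B (Real.log ((P.rnDeriv Q z).toReal)) ∂(Q.withDensity (P.rnDeriv Q)))
    + B * (P.singularPart Q Set.univ).toReal

/-- `H²(P,Q) ≤ (1/2)·KL₂(P‖Q)`. -/
theorem hellingerSq_le_half_klTrunc_two {Ω : Type*} [MeasurableSpace Ω]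
    (P Q : Measure Ω) [IsProbabilityMeasure P] [IsProbabilityMeasure Q] :
    hellingerSq P Q ≤ (1 / 2) * klTrunc 2 P Q := by
  set μ := P + Q with hμdef
  have hPμ : P ≪ μ := Measure.absolutelyContinuous_of_le (Measure.le_add_right le_rfl)
  have hQμ : Q ≪ μ := Measure.absolutelyContinuous_of_le (Measure.le_add_left le_rfl)
  set F : Ω → ℝ := fun x => (P.rnDeriv Q x).toReal with hFdef
  have hF_meas : Measurable F := (Measure.measurable_rnDeriv P Q).ennreal_toReal
  have hF_nonneg : ∀ x, 0 ≤ F x := fun _ => ENNReal.toReal_nonneg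
  have hF_int : Integrable F Q := Measure.integrable_toReal_rnDeriv
  -- a.e. multiplication rule for rnDerivs
  have hae : ∀ᵐ x ∂μ, P.rnDeriv Q x * Q.rnDeriv μ x = P.rnDeriv μ x ∨ Q.rnDeriv μ x = 0 := by
    have hQae : ∀ᵐ x ∂Q, P.rnDeriv Q x * Q.rnDeriv μ x = P.rnDeriv μ x :=
      Measure.rnDeriv_mul_rnDeriv' hQμ
    set A := {x | ¬ P.rnDeriv Q x * Q.rnDeriv μ x = P.rnDeriv μ x} with hA
    have hA_meas : MeasurableSet A :=
      (measurableSet_eq_fun ((Measure.measurable_rnDeriv P Q).mul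
        (Measure.measurable_rnDeriv Q μ)) (Measure.measurable_rnDeriv P μ)).compl
    have hQA : Q A = 0 := hQae
    have hQA' : ∫⁻ x in A, Q.rnDeriv μ x ∂μ = 0 := by
      rw [← withDensity_apply _ hA_meas, Measure.withDensity_rnDeriv_eq Q μ hQμ]
      exact hQA
    have h0 : ∀ᵐ x ∂μ, x ∈ A → Q.rnDeriv μ x = 0 :=
      (setLIntegral_eq_zero_iff hA_meas (Measure.measurable_rnDeriv Q μ)).mp hQA'
    filter_upwards [h0] with x hx
    by_cases hxA : x ∈ A
    · exact Or.inr (hx hxA)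
    · exact Or.inl (not_not.mp hxA)
  -- Step 1: Hellinger integral equals ∫ √F dQ
  have hstep1 : ∫ z, Real.sqrt ((P.rnDeriv μ z).toReal * (Q.rnDeriv μ z).toReal) ∂μ
      = ∫ z, Real.sqrt (F z) ∂Q := by
    rw [← integral_rnDeriv_smul hQμ]
    refine integral_congr_ae ?_
    filter_upwards [hae] with x hx
    rcases hx with hx | hx
    · have hp : (P.rnDeriv μ x).toReal = F x * (Q.rnDeriv μ x).toReal := by
        rw [← hx, ENNReal.toReal_mul]
      rw [hp, smul_eq_mul, mul_assoc,
        Real.sqrt_mul (hF_nonneg x), Real.sqrt_mul_self ENNReal.toReal_nonneg]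
      ring
    · simp [hx]
  -- Step 2: KL integral over the withDensity measure
  have hstep2 : (∫ z, min 2 (Real.log (F z)) ∂(Q.withDensity (P.rnDeriv Q)))
      = ∫ z, F z * min 2 (Real.log (F z)) ∂Q := by
    have haeQ : P.rnDeriv Q =ᵐ[Q] fun x => ((P.rnDeriv Q x).toNNReal : ℝ≥0∞) := by
      filter_upwards [Measure.rnDeriv_lt_top P Q] with x hx
      rw [ENNReal.coe_toNNReal hx.ne]
    rw [withDensity_congr_ae haeQ,
      integral_withDensity_eq_integral_smul ((Measure.measurable_rnDeriv P Q).ennreal_toNNReal)]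
    refine integral_congr_ae (Filter.Eventually.of_forall fun x => ?_)
    simp [NNReal.smul_def, ENNReal.toReal, F]
  -- measurability of the KL integrand
  have hmin_meas : Measurable fun x => min 2 (Real.log (F x)) :=
    measurable_const.min (Real.measurable_log.comp hF_meas)
  -- integrability facts
  have hsqrt_int : Integrable (fun x => Real.sqrt (F x)) Q := by
    refine Integrable.mono' (hF_int.add (integrable_const 1))
      (hF_meas.sqrt.aestronglyMeasurable)
      (Filter.Eventually.of_forall fun x => ?_)
    simp only [Pi.add_apply, Real.norm_eq_abs]
    rw [abs_of_nonneg (Real.sqrt_nonneg _)]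
    exact klaux3 (hF_nonneg x)
  have hg2_int : Integrable (fun x => F x * min 2 (Real.log (F x))) Q := by
    refine Integrable.mono' ((hF_int.const_mul 2).add (integrable_const 1))
      (hF_meas.mul hmin_meas).aestronglyMeasurable
      (Filter.Eventually.of_forall fun x => by
        simp only [Pi.add_apply, Real.norm_eq_abs, ← abs_mul]
        exact klaux2 (hF_nonneg x))
  -- integral of F
  have hintF : ∫ x, F x ∂Q = 1 - (P.singularPart Q Set.univ).toReal := by
    rw [hFdef]
    rw [Measure.integral_toReal_rnDeriv']
    simp
    rfl
  -- main monotone step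
  have hmono : ∫ x, (F x - Real.sqrt (F x)) ∂Q
      ≤ ∫ x, (1/2) * (F x * min 2 (Real.log (F x))) ∂Q := by
    refine integral_mono (hF_int.sub hsqrt_int) (hg2_int.const_mul _)
      (fun x => klaux1 (hF_nonneg x))
  rw [integral_sub hF_int hsqrt_int, integral_const_mul, hintF] at hmono
  rw [hellingerSq, klTrunc, ← hμdef, hstep1, hstep2]
  linarith
end

section
/- For probability measures P and Q on the same measurable space and any B ≥ 2, the truncated KL divergence is bounded by the squared Hellinger distance: KL_B(P‖Q) ≤ 10·e^{B/2}·H²(P,Q). -/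
open MeasureTheory

lemma exp_ge_self' {B : ℝ} (hB : 2 ≤ B) : B ≤ Real.exp (B / 2) := by
  have h := Real.add_one_le_exp (B / 2 - 1)
  have h1 : (2:ℝ) ≤ Real.exp 1 := by have := Real.add_one_le_exp 1; linarith
  have h2 : Real.exp (B / 2 - 1) * Real.exp 1 = Real.exp (B / 2) := by
    rw [← Real.exp_add]; ring_nf
  nlinarith [Real.exp_pos (B / 2 - 1)]

lemma key_lower {B r : ℝ} (hB : 2 ≤ B) (hr : 0 ≤ r) : -1 ≤ r * min B (Real.log r) := by
  rcases eq_or_lt_of_le hr with h0 | h0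
  · simp [← h0]
  rcases le_or_gt r 1 with h1 | h1
  · rw [min_eq_right ((Real.log_nonpos hr h1).trans (by linarith))]
    have h2 : Real.log r⁻¹ ≤ r⁻¹ - 1 := Real.log_le_sub_one_of_pos (by positivity)
    rw [Real.log_inv] at h2
    have h3 : r * (1 - r⁻¹) ≤ r * Real.log r := by
      apply mul_le_mul_of_nonneg_left (by linarith) hr
    have h4 : r * (1 - r⁻¹) = r - 1 := by field_simp
    linarith
  · have h2 : 0 ≤ min B (Real.log r) := le_min (by linarith) (Real.log_nonneg h1.le)
    nlinarith [mul_nonneg hr h2]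

lemma key_upper {B r : ℝ} (hB : 2 ≤ B) (hr : 0 ≤ r) :
    r * min B (Real.log r) ≤ (r - 1) + 5 * Real.exp (B / 2) * (r - 2 * Real.sqrt r + 1) := by
  set E := Real.exp (B / 2) with hE
  have hE1 : 1 ≤ E := Real.one_le_exp (by linarith)
  have hexp1 : (2:ℝ) ≤ Real.exp 1 := by have := Real.add_one_le_exp 1; linarith
  have hE2 : 2 ≤ E := hexp1.trans (Real.exp_le_exp.mpr (by linarith))
  have hBE : B ≤ E := exp_ge_self' hB
  have hEE : E * E = Real.exp B := by rw [hE, ← Real.exp_add]; ring_nf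
  rcases eq_or_lt_of_le hr with h0 | h0
  · rw [← h0]; simp; nlinarith
  set t := Real.sqrt r with htdef
  have ht0 : 0 < t := Real.sqrt_pos.mpr h0
  have htt : t ^ 2 = r := Real.sq_sqrt hr
  rcases le_or_gt (Real.log r) B with hc | hc
  · rw [min_eq_right hc]
    have hlogt : Real.log t ≤ t - 1 := Real.log_le_sub_one_of_pos ht0
    have hlogr : Real.log r = 2 * Real.log t := by
      rw [← htt, Real.log_pow]; push_cast; ring
    have htE : t ≤ E := by
      have h1 : r ≤ Real.exp B := by
        calc r = Real.exp (Real.log r) := (Real.exp_log h0).symm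
        _ ≤ Real.exp B := Real.exp_le_exp.mpr hc
      nlinarith [ht0.le, hE1]
    rw [hlogr, ← htt]
    nlinarith [mul_le_mul_of_nonneg_left hlogt (sq_nonneg t),
      mul_nonneg (sq_nonneg (t - 1)) (by linarith : (0:ℝ) ≤ 5 * E - (2 * t + 1))]
  · rw [min_eq_left hc.le]
    have hrE : E * E < r := by
      rw [hEE]
      calc Real.exp B < Real.exp (Real.log r) := Real.exp_lt_exp.mpr hc
      _ = r := Real.exp_log h0
    have htE : E ≤ t := by
      by_contra h
      push_neg at h
      nlinarith [ht0.le]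
    have h2t : 2 ≤ t := hE2.trans htE
    rw [← htt]
    nlinarith [mul_le_mul_of_nonneg_left hBE (sq_nonneg t),
      mul_nonneg (by linarith : (0:ℝ) ≤ E) (by nlinarith : (0:ℝ) ≤ 4 * t ^ 2 - 10 * t + 5)]

/-- For `B ≥ 2`, `KL_B(P‖Q) ≤ 10 e^{B/2} H²(P,Q)`. -/
theorem klTrunc_le_hellingerSq {Ω : Type*} [MeasurableSpace Ω]
    (P Q : Measure Ω) [IsProbabilityMeasure P] [IsProbabilityMeasure Q]
    (B : ℝ) (hB : 2 ≤ B) :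
    klTrunc B P Q ≤ 10 * Real.exp (B / 2) * hellingerSq P Q := by
  classical
  set E := Real.exp (B / 2) with hE
  have hE1 : 1 ≤ E := Real.one_le_exp (by linarith)
  have hBE : B ≤ E := exp_ge_self' hB
  set f := P.rnDeriv Q with hf_def
  have hf_meas : Measurable f := Measure.measurable_rnDeriv P Q
  set r : Ω → ℝ := fun x => (f x).toReal with hr_def
  have hr_meas : Measurable r := hf_meas.ennreal_toReal
  set g : Ω → ℝ := fun x => min B (Real.log (r x)) with hg_def
  have hg_meas : Measurable g := measurable_const.min (Real.measurable_log.comp hr_meas)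
  set W := Q.withDensity f with hW_def
  set sing := P.singularPart Q with hsing_def
  set s := (sing Set.univ).toReal with hs_def
  have hs0 : 0 ≤ s := ENNReal.toReal_nonneg
  haveI : IsFiniteMeasure W := by
    constructor
    rw [hW_def, withDensity_apply _ MeasurableSet.univ, setLIntegral_univ]
    exact Measure.lintegral_rnDeriv_le.trans_lt (measure_lt_top P _)
  have hPdec : P = sing + W := P.haveLebesgueDecomposition_add Q
  -- measure arithmetic
  have h1 : sing Set.univ + W Set.univ = 1 := by
    rw [← Measure.add_apply, ← hPdec, measure_univ]
  have hs_ne_top : sing Set.univ ≠ ⊤ := by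
    refine ne_top_of_le_ne_top ?_ (le_trans le_self_add h1.le)
    exact ENNReal.one_ne_top
  have hw_ne_top : W Set.univ ≠ ⊤ := by
    refine ne_top_of_le_ne_top ?_ (le_trans le_add_self h1.le)
    exact ENNReal.one_ne_top
  set w := (W Set.univ).toReal with hw_def
  have hsw : s + w = 1 := by
    rw [hs_def, hw_def, ← ENNReal.toReal_add hs_ne_top hw_ne_top, h1, ENNReal.toReal_one]
  -- integral of r
  have h_int_r : ∫ x, r x ∂Q = w := by
    rw [hr_def]
    rw [integral_toReal hf_meas.aemeasurable (Measure.rnDeriv_lt_top P Q)]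
    congr 1
    rw [hW_def, withDensity_apply _ MeasurableSet.univ, setLIntegral_univ]
  -- integrability facts
  have hr_int : Integrable r Q := Measure.integrable_toReal_rnDeriv
  have hsqrt_int : Integrable (fun x => Real.sqrt (r x)) Q := by
    refine Integrable.mono' (hr_int.add (integrable_const 1)) ?_ ?_
    · exact (Real.continuous_sqrt.measurable.comp hr_meas).aestronglyMeasurable
    · refine Filter.Eventually.of_forall fun x => ?_
      simp only [Pi.add_apply, Real.norm_eq_abs]
      rw [abs_of_nonneg (Real.sqrt_nonneg _)]
      nlinarith [Real.sq_sqrt (ENNReal.toReal_nonneg : 0 ≤ r x), Real.sqrt_nonneg (r x),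
        sq_nonneg (Real.sqrt (r x) - 1)]
  set J := ∫ x, Real.sqrt (r x) ∂Q with hJ_def
  set RHS : Ω → ℝ := fun x => (r x - 1) + 5 * E * (r x - 2 * Real.sqrt (r x) + 1) with hRHS_def
  have hRHS_int : Integrable RHS Q := by
    apply Integrable.add (hr_int.sub (integrable_const 1))
    exact ((hr_int.sub (hsqrt_int.const_mul 2)).add (integrable_const 1)).const_mul (5 * E)
  have hLHS_int : Integrable (fun x => r x * g x) Q := by
    refine Integrable.mono' (hRHS_int.abs.add (integrable_const 1)) ?_ ?_
    · exact (hr_meas.mul hg_meas).aestronglyMeasurable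
    · refine Filter.Eventually.of_forall fun x => ?_
      have hup := key_upper (r := r x) hB ENNReal.toReal_nonneg
      have hlow := key_lower (r := r x) hB ENNReal.toReal_nonneg
      have hgx : g x = min B (Real.log (r x)) := rfl
      have hRx : RHS x = (r x - 1) + 5 * E * (r x - 2 * Real.sqrt (r x) + 1) := rfl
      have h1 := abs_nonneg (RHS x)
      have h2 := le_abs_self (RHS x)
      simp only [Pi.add_apply, Real.norm_eq_abs]
      rw [abs_le]
      constructor
      · rw [hgx]; linarith
      · rw [hgx]; rw [hRx] at h2; linarith
  have hmono : ∫ x, r x * g x ∂Q ≤ ∫ x, RHS x ∂Q :=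
    integral_mono hLHS_int hRHS_int (fun x => key_upper hB ENNReal.toReal_nonneg)
  have hRHS_val : ∫ x, RHS x ∂Q = (w - 1) + 5 * E * (w - 2 * J + 1) := by
    have e1 : ∫ x, RHS x ∂Q
        = ∫ x, ((1 + 5 * E) * r x + (-(10 * E)) * Real.sqrt (r x) + (5 * E - 1)) ∂Q := by
      apply integral_congr_ae
      filter_upwards with x
      simp only [hRHS_def]
      ring
    have i1 : Integrable (fun x => (1 + 5 * E) * r x + (-(10 * E)) * Real.sqrt (r x)) Q :=
      (hr_int.const_mul _).add (hsqrt_int.const_mul _)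
    rw [e1, integral_add i1 (integrable_const _),
      integral_add (hr_int.const_mul _) (hsqrt_int.const_mul _),
      integral_const_mul, integral_const_mul, integral_const, h_int_r]
    simp only [measure_univ, probReal_univ, ENNReal.toReal_one, one_smul, hJ_def]
    ring
  -- KL integral transformation
  have hKL : ∫ z, g z ∂W = ∫ x, r x * g x ∂Q := by
    rw [hW_def, ← integral_rnDeriv_smul (withDensity_absolutelyContinuous Q f)]
    apply integral_congr_ae
    filter_upwards [Measure.rnDeriv_withDensity Q hf_meas] with x hx
    rw [hx]
    simp [smul_eq_mul, hr_def]
  -- Hellinger identity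
  set p := P.rnDeriv (P + Q) with hp_def
  set q := Q.rnDeriv (P + Q) with hq_def
  have hq_meas : Measurable q := Measure.measurable_rnDeriv Q (P + Q)
  have hQac : Q ≪ P + Q := by
    rw [add_comm P Q]
    exact Measure.AbsolutelyContinuous.rfl.add_right P
  have hQd : (P + Q).withDensity q = Q := Measure.withDensity_rnDeriv_eq Q (P + Q) hQac
  have hW2 : W = (P + Q).withDensity (q * f) := by
    rw [withDensity_mul _ hq_meas hf_meas, hQd, hW_def]
  have h2 : W.rnDeriv (P + Q) =ᵐ[P + Q] q * f := by
    rw [hW2]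
    exact Measure.rnDeriv_withDensity _ (hq_meas.mul hf_meas)
  have h1 : p =ᵐ[P + Q] sing.rnDeriv (P + Q) + W.rnDeriv (P + Q) := by
    have h := Measure.rnDeriv_add sing W (P + Q)
    rw [← hPdec] at h
    exact h
  obtain ⟨A, hA, hA1, hA2⟩ := Measure.mutuallySingular_singularPart P Q
  have hi : ∀ᵐ x ∂(P + Q), x ∈ A → sing.rnDeriv (P + Q) x = 0 := by
    rw [← ae_restrict_iff' hA]
    have h0 : ∫⁻ x in A, sing.rnDeriv (P + Q) x ∂(P + Q) = 0 :=
      le_antisymm ((Measure.setLIntegral_rnDeriv_le A).trans (le_of_eq hA1)) zero_le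
    filter_upwards [(lintegral_eq_zero_iff (Measure.measurable_rnDeriv _ _)).mp h0] with x hx
    simpa using hx
  have hii : ∀ᵐ x ∂(P + Q), x ∈ Aᶜ → q x = 0 := by
    rw [← ae_restrict_iff' hA.compl]
    have h0 : ∫⁻ x in Aᶜ, q x ∂(P + Q) = 0 := by
      rw [Measure.setLIntegral_rnDeriv' hQac hA.compl, hA2]
    filter_upwards [(lintegral_eq_zero_iff hq_meas).mp h0] with x hx
    simpa using hx
  have hfi : ∀ᵐ x ∂(P + Q), x ∈ {y | f y = ⊤} → q x = 0 := by
    have hS : MeasurableSet {y | f y = ⊤} := hf_meas (measurableSet_singleton ⊤)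
    rw [← ae_restrict_iff' hS]
    have hQS : Q {y | f y = ⊤} = 0 := by
      have h := ae_iff.mp (Measure.rnDeriv_lt_top P Q)
      simpa only [not_lt, top_le_iff] using h
    have h0 : ∫⁻ x in {y | f y = ⊤}, q x ∂(P + Q) = 0 := by
      rw [Measure.setLIntegral_rnDeriv' hQac hS, hQS]
    filter_upwards [(lintegral_eq_zero_iff hq_meas).mp h0] with x hx
    simpa using hx
  have hHell : ∫ z, Real.sqrt ((p z).toReal * (q z).toReal) ∂(P + Q) = J := by
    have heq : (fun z => Real.sqrt ((p z).toReal * (q z).toReal)) =ᵐ[P + Q]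
        fun z => (q z).toReal • Real.sqrt (r z) := by
      filter_upwards [h1, h2, hi, hii, hfi] with x hx1 hx2 hxA hxAc hxf
      simp only [hr_def]
      by_cases hq0 : q x = 0
      · simp [hq0]
      · have hxA' : x ∈ A := by
          by_contra h
          exact hq0 (hxAc h)
        have hsr : sing.rnDeriv (P + Q) x = 0 := hxA hxA'
        have hft : f x ≠ ⊤ := fun h => hq0 (hxf h)
        have hp' : p x = q x * f x := by
          rw [hx1, Pi.add_apply, hsr, hx2, zero_add, Pi.mul_apply]
        rw [hp', ENNReal.toReal_mul, smul_eq_mul]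
        rw [show (q x).toReal * (f x).toReal * (q x).toReal
            = (f x).toReal * ((q x).toReal) ^ 2 by ring,
          Real.sqrt_mul ENNReal.toReal_nonneg, Real.sqrt_sq ENNReal.toReal_nonneg]
        ring
    calc ∫ z, Real.sqrt ((p z).toReal * (q z).toReal) ∂(P + Q)
        = ∫ z, (q z).toReal • Real.sqrt (r z) ∂(P + Q) := integral_congr_ae heq
      _ = ∫ z, Real.sqrt (r z) ∂Q := integral_rnDeriv_smul hQac
      _ = J := rfl
  -- final assembly
  have hs_mul : s * (B - 1 - 5 * E) ≤ 0 :=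
    mul_nonpos_of_nonneg_of_nonpos hs0 (by linarith)
  unfold klTrunc hellingerSq
  rw [← hf_def, ← hsing_def, ← hs_def, ← hp_def, ← hq_def]
  have hgl : (∫ z, min B (Real.log ((f z).toReal)) ∂(Q.withDensity f)) = ∫ z, g z ∂W := rfl
  rw [hgl, hKL, hHell]
  nlinarith [hmono, hRHS_val, hsw, hs_mul]
end

section
/- For probability measures P, Q with P ≪ Q and density ratio bounded: if dP/dQ ≤ e^B Q-a.e. fails only on a set, then the P-mass of the set where dP/dQ > e^B is controlled by Hellinger distance: ∫_{dP/dQ > e^B} dP ≤ 2(1 − e^{−B/2})^{−2} H²(P,Q), for any B > 0. -/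
open MeasureTheory

/-- The `P`-mass of the set where `dP/dQ > e^B` is controlled by the Hellinger distance. -/
theorem mass_large_ratio_le_hellinger {Ω : Type*} [MeasurableSpace Ω]
    (P Q : Measure Ω) [IsProbabilityMeasure P] [IsProbabilityMeasure Q]
    (hPQ : P ≪ Q) (B : ℝ) (hB : 0 < B) :
    (P {z | Real.exp B < (P.rnDeriv Q z).toReal}).toReal ≤
      2 * ((1 - Real.exp (-B / 2))⁻¹) ^ 2 * hellingerSq P Q := by
  set μ : Measure Ω := P + Q with hμ
  have hPμ : P ≪ μ := Measure.absolutelyContinuous_of_le (Measure.le_add_right le_rfl)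
  have hQμ : Q ≪ μ := Measure.absolutelyContinuous_of_le (Measure.le_add_left le_rfl)
  set p : Ω → ℝ := fun z => (P.rnDeriv μ z).toReal with hp
  set q : Ω → ℝ := fun z => (Q.rnDeriv μ z).toReal with hq
  set r : Ω → ℝ := fun z => (P.rnDeriv Q z).toReal with hr
  set c : ℝ := 1 - Real.exp (-B / 2) with hc
  have hc0 : 0 < c := by
    have : Real.exp (-B / 2) < 1 := by
      rw [Real.exp_lt_one_iff]; linarith
    simpa [hc] using this
  set S : Set Ω := {z | Real.exp B < r z} with hS
  have hSm : MeasurableSet S :=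
    measurableSet_lt measurable_const ((P.measurable_rnDeriv Q).ennreal_toReal)
  -- measurability
  have hpm : Measurable p := (P.measurable_rnDeriv μ).ennreal_toReal
  have hqm : Measurable q := (Q.measurable_rnDeriv μ).ennreal_toReal
  have hpnn : ∀ z, 0 ≤ p z := fun z => ENNReal.toReal_nonneg
  have hqnn : ∀ z, 0 ≤ q z := fun z => ENNReal.toReal_nonneg
  -- integrability
  have hip : Integrable p μ := Measure.integrable_toReal_rnDeriv
  have hiq : Integrable q μ := Measure.integrable_toReal_rnDeriv
  have hisq : Integrable (fun z => Real.sqrt (p z * q z)) μ := by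
    refine Integrable.mono' ((hip.add hiq).div_const 2)
      ((hpm.mul hqm).sqrt.aestronglyMeasurable) (Filter.Eventually.of_forall fun z => ?_)
    have h1 : Real.sqrt (p z * q z) = Real.sqrt (p z) * Real.sqrt (q z) :=
      Real.sqrt_mul (hpnn z) _
    have h2 : Real.sqrt (p z) ^ 2 = p z := Real.sq_sqrt (hpnn z)
    have h3 : Real.sqrt (q z) ^ 2 = q z := Real.sq_sqrt (hqnn z)
    rw [Real.norm_of_nonneg (Real.sqrt_nonneg _), h1]
    simp only [Pi.add_apply]
    nlinarith [Real.sqrt_nonneg (p z), Real.sqrt_nonneg (q z),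
      sq_nonneg (Real.sqrt (p z) - Real.sqrt (q z))]
  set f : Ω → ℝ := fun z => (Real.sqrt (p z) - Real.sqrt (q z)) ^ 2 with hf
  have hfeq : ∀ z, f z = p z + q z - 2 * Real.sqrt (p z * q z) := by
    intro z
    have h1 : Real.sqrt (p z * q z) = Real.sqrt (p z) * Real.sqrt (q z) :=
      Real.sqrt_mul (hpnn z) _
    have h2 : Real.sqrt (p z) ^ 2 = p z := Real.sq_sqrt (hpnn z)
    have h3 : Real.sqrt (q z) ^ 2 = q z := Real.sq_sqrt (hqnn z)
    simp only [hf]; rw [h1]; ring_nf; nlinarith []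
  have hif : Integrable f μ := by
    have : f = fun z => p z + q z - 2 * Real.sqrt (p z * q z) := funext hfeq
    rw [this]
    exact (hip.add hiq).sub (hisq.const_mul 2)
  -- ∫ f = 2 * hellingerSq
  have hintp : ∫ z, p z ∂μ = 1 := by
    rw [hp, Measure.integral_toReal_rnDeriv hPμ]; simp
  have hintq : ∫ z, q z ∂μ = 1 := by
    rw [hq, Measure.integral_toReal_rnDeriv hQμ]; simp
  have hintf : ∫ z, f z ∂μ = 2 * hellingerSq P Q := by
    have : ∫ z, f z ∂μ = ∫ z, (p z + q z - 2 * Real.sqrt (p z * q z)) ∂μ := by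
      simp_rw [hfeq]
    have hsub := integral_sub (μ := μ) (f := fun z => p z + q z)
      (g := fun z => 2 * Real.sqrt (p z * q z)) (hip.add hiq) (hisq.const_mul 2)
    have hadd := integral_add (μ := μ) (f := fun z => p z) (g := fun z => q z) hip hiq
    rw [this, hsub, hadd, hintp, hintq, integral_const_mul, hellingerSq]
    ring
  -- a.e. inequality on S : c^2 * p ≤ f
  have hae : ∀ᵐ z ∂(μ.restrict S), c ^ 2 * p z ≤ f z := by
    have hmul : P.rnDeriv Q * Q.rnDeriv μ =ᵐ[μ] P.rnDeriv μ :=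
      Measure.rnDeriv_mul_rnDeriv hPQ
    have hmulS : ∀ᵐ z ∂(μ.restrict S), (P.rnDeriv Q * Q.rnDeriv μ) z = P.rnDeriv μ z :=
      ae_restrict_of_ae hmul
    filter_upwards [hmulS, ae_restrict_mem hSm] with z hz hzS
    have hpz : p z = r z * q z := by
      rw [hp]; simp only [← hz, Pi.mul_apply, ENNReal.toReal_mul]; rfl
    have hrz : Real.exp B < r z := hzS
    have hexp : 0 < Real.exp B := Real.exp_pos B
    have hqle : q z ≤ Real.exp (-B) * p z := by
      rw [hpz, Real.exp_neg, inv_mul_eq_div, le_div_iff₀ hexp]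
      nlinarith [hqnn z]
    have hsq : Real.sqrt (q z) ≤ Real.exp (-B / 2) * Real.sqrt (p z) := by
      calc Real.sqrt (q z) ≤ Real.sqrt (Real.exp (-B) * p z) :=
            Real.sqrt_le_sqrt hqle
        _ = Real.exp (-B / 2) * Real.sqrt (p z) := by
            rw [Real.sqrt_mul (Real.exp_pos _).le]
            congr 1
            have hE : Real.exp (-B) = Real.exp (-B / 2) * Real.exp (-B / 2) := by
              rw [← Real.exp_add]; ring_nf
            rw [hE]
            exact Real.sqrt_mul_self (Real.exp_pos _).le
    have hsp : Real.sqrt (p z) ^ 2 = p z := Real.sq_sqrt (hpnn z)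
    have hcle : Real.exp (-B / 2) < 1 := by rw [Real.exp_lt_one_iff]; linarith
    have h1 : c * Real.sqrt (p z) ≤ Real.sqrt (p z) - Real.sqrt (q z) := by
      rw [hc]
      nlinarith [hsq, Real.sqrt_nonneg (p z)]
    have h2 : 0 ≤ c * Real.sqrt (p z) := by positivity
    have h3 := mul_self_le_mul_self h2 h1
    simp only [hf]
    nlinarith [h3, hsp]
  -- put it together
  have hPS : (P S).toReal = ∫ z in S, p z ∂μ :=
    (Measure.setIntegral_toReal_rnDeriv hPμ S).symm
  have hifS : IntegrableOn f S μ := hif.integrableOn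
  have hipS : IntegrableOn (fun z => c ^ 2 * p z) S μ := (hip.const_mul _).integrableOn
  have key : c ^ 2 * (P S).toReal ≤ 2 * hellingerSq P Q := by
    calc c ^ 2 * (P S).toReal = ∫ z in S, c ^ 2 * p z ∂μ := by
          rw [hPS, ← integral_const_mul]
      _ ≤ ∫ z in S, f z ∂μ := integral_mono_ae hipS hifS hae
      _ ≤ ∫ z, f z ∂μ := by
          refine setIntegral_le_integral hif (Filter.Eventually.of_forall fun z => ?_)
          simp only [hf]; positivity
      _ = 2 * hellingerSq P Q := hintf
  have hPSnn : (0 : ℝ) ≤ (P S).toReal := ENNReal.toReal_nonneg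
  have hc2 : 0 < c ^ 2 := by positivity
  calc (P S).toReal = (c ^ 2)⁻¹ * (c ^ 2 * (P S).toReal) := by
        rw [← mul_assoc, inv_mul_cancel₀ hc2.ne', one_mul]
    _ ≤ (c ^ 2)⁻¹ * (2 * hellingerSq P Q) := by
        exact mul_le_mul_of_nonneg_left key (by positivity)
    _ = 2 * (c⁻¹) ^ 2 * hellingerSq P Q := by
        rw [inv_pow]; ring
end

section
/- Consider compositions of affine maps and ReLU layers: let f, g : ℝ^K → ℝ^K be networks of depth L with identical architecture, widths bounded by W, with all weight matrices and bias vectors entrywise bounded by 1, and suppose corresponding parameters of f and g differ entrywise by at most δ. Then on the unit cube, ‖f(x) − g(x)‖_∞ ≤ L·(W+1)^L·δ. -/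
lemma affine_bound {n m : ℕ} (A : Matrix (Fin m) (Fin n) ℝ) (b : Fin m → ℝ)
    (v : Fin n → ℝ) (M : ℝ) (hM : 0 ≤ M)
    (hA : ∀ i j, |A i j| ≤ 1) (hb : ∀ i, |b i| ≤ 1)
    (hv : ∀ j, |v j| ≤ M) (i : Fin m) :
    |A.mulVec v i + b i| ≤ n * M + 1 := by
  have h1 : |A.mulVec v i| ≤ n * M := by
    simp only [Matrix.mulVec, dotProduct]
    calc |∑ j, A i j * v j| ≤ ∑ j, |A i j * v j| := Finset.abs_sum_le_sum_abs _ _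
      _ ≤ ∑ _j : Fin n, M := by
          apply Finset.sum_le_sum; intro j _
          rw [abs_mul]
          calc |A i j| * |v j| ≤ 1 * M :=
            mul_le_mul (hA i j) (hv j) (abs_nonneg _) zero_le_one
          _ = M := one_mul M
      _ = n * M := by simp [Finset.sum_const, mul_comm]
  calc |A.mulVec v i + b i| ≤ |A.mulVec v i| + |b i| := abs_add_le _ _
    _ ≤ n * M + 1 := add_le_add h1 (hb i)

lemma affine_diff {n m : ℕ} (A A' : Matrix (Fin m) (Fin n) ℝ) (b b' : Fin m → ℝ)
    (v v' : Fin n → ℝ) (M D δ : ℝ)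
    (hA : ∀ i j, |A i j| ≤ 1) (hdA : ∀ i j, |A i j - A' i j| ≤ δ)
    (hdb : ∀ i, |b i - b' i| ≤ δ)
    (hv' : ∀ j, |v' j| ≤ M) (hd : ∀ j, |v j - v' j| ≤ D)
    (hM : 0 ≤ M) (hD : 0 ≤ D) (hδ : 0 ≤ δ) (i : Fin m) :
    |(A.mulVec v i + b i) - (A'.mulVec v' i + b' i)| ≤ n * (D + δ * M) + δ := by
  have key : A.mulVec v i - A'.mulVec v' i
      = ∑ j, (A i j * (v j - v' j) + (A i j - A' i j) * v' j) := by
    simp only [Matrix.mulVec, dotProduct, ← Finset.sum_sub_distrib]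
    apply Finset.sum_congr rfl; intro j _; ring
  have h1 : |A.mulVec v i - A'.mulVec v' i| ≤ n * (D + δ * M) := by
    rw [key]
    calc |∑ j, (A i j * (v j - v' j) + (A i j - A' i j) * v' j)|
        ≤ ∑ j, |A i j * (v j - v' j) + (A i j - A' i j) * v' j| :=
          Finset.abs_sum_le_sum_abs _ _
      _ ≤ ∑ _j : Fin n, (D + δ * M) := by
          apply Finset.sum_le_sum; intro j _
          calc |A i j * (v j - v' j) + (A i j - A' i j) * v' j|
              ≤ |A i j * (v j - v' j)| + |(A i j - A' i j) * v' j| := abs_add_le _ _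
            _ ≤ D + δ * M := by
                rw [abs_mul, abs_mul]
                apply add_le_add
                · calc |A i j| * |v j - v' j| ≤ 1 * D :=
                    mul_le_mul (hA i j) (hd j) (abs_nonneg _) zero_le_one
                  _ = D := one_mul D
                · exact mul_le_mul (hdA i j) (hv' j) (abs_nonneg _) hδ
      _ = n * (D + δ * M) := by simp [Finset.sum_const]; ring
  calc |(A.mulVec v i + b i) - (A'.mulVec v' i + b' i)|
      = |(A.mulVec v i - A'.mulVec v' i) + (b i - b' i)| := by ring_nf
    _ ≤ |A.mulVec v i - A'.mulVec v' i| + |b i - b' i| := abs_add_le _ _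
    _ ≤ n * (D + δ * M) + δ := add_le_add h1 (hdb i)
/-- Hidden-layer evaluation: `hiddenEval w A b k x` is the output after `k` affine layers,
each followed by a coordinatewise ReLU. -/
noncomputable def hiddenEval (w : ℕ → ℕ)
    (A : ∀ k : ℕ, Matrix (Fin (w (k + 1))) (Fin (w k)) ℝ)
    (b : ∀ k : ℕ, Fin (w (k + 1)) → ℝ) :
    ∀ k : ℕ, (Fin (w 0) → ℝ) → Fin (w k) → ℝ
  | 0 => fun x => x
  | (k + 1) => fun x i => max ((A k).mulVec (hiddenEval w A b k x) i + b k i) 0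

/-- Network evaluation with `L` affine layers and ReLU activations between them
(no ReLU after the last affine layer). -/
noncomputable def netEval (w : ℕ → ℕ)
    (A : ∀ k : ℕ, Matrix (Fin (w (k + 1))) (Fin (w k)) ℝ)
    (b : ∀ k : ℕ, Fin (w (k + 1)) → ℝ) :
    ∀ L : ℕ, (Fin (w 0) → ℝ) → Fin (w L) → ℝ
  | 0 => fun x => x
  | (L + 1) => fun x => (A L).mulVec (hiddenEval w A b L x) + b L

theorem network_param_perturbation (K W L : ℕ) (hL : 1 ≤ L) (δ : ℝ) (hδ : 0 ≤ δ)
    (w : ℕ → ℕ) (hw0 : w 0 = K) (hwL : w L = K) (hwW : ∀ k ≤ L, w k ≤ W)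
    (A A' : ∀ k : ℕ, Matrix (Fin (w (k + 1))) (Fin (w k)) ℝ)
    (b b' : ∀ k : ℕ, Fin (w (k + 1)) → ℝ)
    (hA : ∀ k < L, ∀ i j, |A k i j| ≤ 1) (hA' : ∀ k < L, ∀ i j, |A' k i j| ≤ 1)
    (hb : ∀ k < L, ∀ i, |b k i| ≤ 1) (hb' : ∀ k < L, ∀ i, |b' k i| ≤ 1)
    (hdA : ∀ k < L, ∀ i j, |A k i j - A' k i j| ≤ δ)
    (hdb : ∀ k < L, ∀ i, |b k i - b' k i| ≤ δ)
    (x : Fin (w 0) → ℝ) (hx : ∀ i, x i ∈ Set.Icc (0:ℝ) 1) :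
    ∀ i, |netEval w A b L x i - netEval w A' b' L x i| ≤ L * (W + 1) ^ L * δ := by
  have hW1 : ∀ k : ℕ, (1:ℝ) ≤ ((W:ℝ) + 1) ^ k := fun k =>
    one_le_pow₀ (by linarith [Nat.cast_nonneg (α := ℝ) W])
  -- bound on hidden layers of the primed network
  have hM : ∀ k, k ≤ L → ∀ i, |hiddenEval w A' b' k x i| ≤ ((W:ℝ) + 1) ^ k := by
    intro k
    induction k with
    | zero =>
      intro _ i
      simp only [hiddenEval, pow_zero]
      have := hx i
      rw [Set.mem_Icc] at this
      rw [abs_le]; constructor <;> linarith [this.1, this.2]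
    | succ k ih =>
      intro hk i
      have hkL : k < L := hk
      have ihM := ih (le_of_lt hkL)
      have hstep := affine_bound (A' k) (b' k) (hiddenEval w A' b' k x)
        (((W:ℝ) + 1) ^ k) (by positivity) (hA' k hkL) (hb' k hkL) ihM i
      have hrelu : |hiddenEval w A' b' (k + 1) x i|
          ≤ |(A' k).mulVec (hiddenEval w A' b' k x) i + b' k i| := by
        simp only [hiddenEval]
        rw [abs_le]; constructor
        · have := abs_nonneg ((A' k).mulVec (hiddenEval w A' b' k x) i + b' k i)
          have h2 := le_max_right ((A' k).mulVec (hiddenEval w A' b' k x) i + b' k i) 0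
          linarith
        · exact max_le (le_abs_self _) (abs_nonneg _)
      have hwk : (w k : ℝ) ≤ W := by exact_mod_cast hwW k (le_of_lt hkL)
      have hp : ((W:ℝ)) * ((W:ℝ) + 1) ^ k + 1 ≤ ((W:ℝ) + 1) ^ (k + 1) := by
        have := hW1 k
        rw [pow_succ]
        nlinarith
      have hmon : (w k : ℝ) * ((W:ℝ) + 1) ^ k + 1 ≤ (W:ℝ) * ((W:ℝ) + 1) ^ k + 1 := by
        have := hW1 k
        nlinarith
      linarith
  -- difference bound on hidden layers
  have hD : ∀ k, k ≤ L → ∀ i,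
      |hiddenEval w A b k x i - hiddenEval w A' b' k x i| ≤ k * ((W:ℝ) + 1) ^ k * δ := by
    intro k
    induction k with
    | zero => intro _ i; simp [hiddenEval]
    | succ k ih =>
      intro hk i
      have hkL : k < L := hk
      have ihD := ih (le_of_lt hkL)
      have hDnn : (0:ℝ) ≤ (k : ℝ) * ((W:ℝ) + 1) ^ k * δ := by positivity
      have hstep := affine_diff (A k) (A' k) (b k) (b' k)
        (hiddenEval w A b k x) (hiddenEval w A' b' k x)
        (((W:ℝ) + 1) ^ k) ((k : ℝ) * ((W:ℝ) + 1) ^ k * δ) δ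
        (hA k hkL) (hdA k hkL) (hdb k hkL) (hM k (le_of_lt hkL)) ihD
        (by positivity) hDnn hδ i
      have hrelu : |hiddenEval w A b (k + 1) x i - hiddenEval w A' b' (k + 1) x i|
          ≤ |((A k).mulVec (hiddenEval w A b k x) i + b k i)
             - ((A' k).mulVec (hiddenEval w A' b' k x) i + b' k i)| := by
        simp only [hiddenEval]
        exact abs_max_sub_max_le_abs _ _ _
      have hwk : (w k : ℝ) ≤ W := by exact_mod_cast hwW k (le_of_lt hkL)
      have hfin : (w k : ℝ) * ((k : ℝ) * ((W:ℝ) + 1) ^ k * δ + δ * ((W:ℝ) + 1) ^ k) + δ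
          ≤ ((k : ℝ) + 1) * ((W:ℝ) + 1) ^ (k + 1) * δ := by
        have h1 := hW1 k
        have hWk : (0:ℝ) ≤ ((W:ℝ) + 1) ^ k := by positivity
        have hknn : (0:ℝ) ≤ (k:ℝ) := Nat.cast_nonneg k
        rw [pow_succ]
        nlinarith [mul_nonneg (mul_nonneg hknn hWk) hδ, mul_nonneg hWk hδ,
          mul_le_mul_of_nonneg_right hwk (mul_nonneg (mul_nonneg hknn hWk) hδ)]
      calc |hiddenEval w A b (k + 1) x i - hiddenEval w A' b' (k + 1) x i|
          ≤ (w k : ℝ) * ((k : ℝ) * ((W:ℝ) + 1) ^ k * δ + δ * ((W:ℝ) + 1) ^ k) + δ := by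
            exact le_trans hrelu hstep
        _ ≤ ((k : ℝ) + 1) * ((W:ℝ) + 1) ^ (k + 1) * δ := hfin
        _ = ((k + 1 : ℕ) : ℝ) * ((W:ℝ) + 1) ^ (k + 1) * δ := by push_cast; ring
      -- cast (k+1 : ℕ) to ℝ handled below
  -- final layer
  obtain ⟨m, rfl⟩ : ∃ m, L = m + 1 := ⟨L - 1, by omega⟩
  intro i
  have hmL : m < m + 1 := Nat.lt_succ_self m
  have hstep := affine_diff (A m) (A' m) (b m) (b' m)
    (hiddenEval w A b m x) (hiddenEval w A' b' m x)
    (((W:ℝ) + 1) ^ m) ((m : ℝ) * ((W:ℝ) + 1) ^ m * δ) δ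
    (hA m hmL) (hdA m hmL) (hdb m hmL) (hM m (le_of_lt hmL)) (hD m (le_of_lt hmL))
    (by positivity) (by positivity) hδ i
  have hwm : (w m : ℝ) ≤ W := by exact_mod_cast hwW m (le_of_lt hmL)
  have hnet : netEval w A b (m + 1) x i - netEval w A' b' (m + 1) x i
      = ((A m).mulVec (hiddenEval w A b m x) i + b m i)
        - ((A' m).mulVec (hiddenEval w A' b' m x) i + b' m i) := by
    simp [netEval]
  rw [hnet]
  have h1 := hW1 m
  have hWk : (0:ℝ) ≤ ((W:ℝ) + 1) ^ m := by positivity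
  have hknn : (0:ℝ) ≤ (m:ℝ) := Nat.cast_nonneg m
  have hcast : ((m + 1 : ℕ) : ℝ) = (m : ℝ) + 1 := by push_cast; ring
  rw [hcast, pow_succ]
  nlinarith [hstep, mul_nonneg (mul_nonneg hknn hWk) hδ, mul_nonneg hWk hδ,
    mul_le_mul_of_nonneg_right hwm (mul_nonneg (mul_nonneg hknn hWk) hδ)]
end
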